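/- For a, b ∈ ℙ^{d-1}(R_n), let v_n(a,b) be the largest v ∈ {0,…,n} such that a and b have equal images in ℙ^{d-1}(R_v). Then can_n(b) - can_n(a) = π^{v_n(a,b)} · u for some u ∈ R_n^d having at least one invertible coordinate, where can_n denotes the canonical representative (first unit coordinate equal to 1). -/

import Mathlib

/-- Let `R` be a complete discrete valuation ring with uniformizer `π`, and
`R_n = R/(π)^n`. Let `ca, cb` be canonical representatives (first invertible coordinate
equal to `1`, earlier coordinates non-invertible) of two points of `ℙ^{d-1}(R_n)`, and let
`v = v_n(a,b)` be the largest `v ≤ n` such that the reductions of `ca` and `cb` modulo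
`(π)^v` agree. Then `cb - ca = π^v · u` for some tuple `u ∈ R_n^d` having at least one
invertible coordinate. -/
theorem canonical_sub_eq_pow_uniformizer_smul
    (R : Type*) [CommRing R] [IsDomain R] [IsDiscreteValuationRing R]
    [IsAdicComplete (IsLocalRing.maximalIdeal R) R]
    (π : R) (hπ : Irreducible π) (d n : ℕ) (hn : 1 ≤ n) (hd : 2 ≤ d)
    (ca cb : Fin d → R ⧸ (Ideal.span {π} : Ideal R) ^ n)
    (hcaCan : ∃ j, ca j = 1 ∧ ∀ i < j, ¬IsUnit (ca i))
    (hcbCan : ∃ j, cb j = 1 ∧ ∀ i < j, ¬IsUnit (cb i))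
    (v : ℕ) (hvle : v ≤ n)
    (hveq : ∀ i,
      Ideal.Quotient.factor (Ideal.pow_le_pow_right hvle) (ca i) =
      Ideal.Quotient.factor (Ideal.pow_le_pow_right hvle) (cb i))
    (hvmax : ∀ h : v + 1 ≤ n, ¬ ∀ i,
      Ideal.Quotient.factor (Ideal.pow_le_pow_right h) (ca i) =
      Ideal.Quotient.factor (Ideal.pow_le_pow_right h) (cb i)) :
    ∃ u : Fin d → R ⧸ (Ideal.span {π} : Ideal R) ^ n,
      (∃ i, IsUnit (u i)) ∧
      ∀ i, cb i - ca i = (Ideal.Quotient.mk _ π) ^ v * u i := by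
  classical
  by_cases hv : v = n
  · subst hv
    refine ⟨fun _ => 1, ⟨⟨0, by omega⟩, isUnit_one⟩, fun i => ?_⟩
    have hzero : (Ideal.Quotient.mk ((Ideal.span {π} : Ideal R) ^ v) π) ^ v = 0 := by
      rw [← map_pow, Ideal.Quotient.eq_zero_iff_mem]
      exact Ideal.pow_mem_pow (Ideal.mem_span_singleton_self π) v
    have hca : ca i = cb i := by
      obtain ⟨a, ha⟩ := Ideal.Quotient.mk_surjective (ca i)
      obtain ⟨b, hb⟩ := Ideal.Quotient.mk_surjective (cb i)
      have := hveq i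
      rw [← ha, ← hb, Ideal.Quotient.factor_mk, Ideal.Quotient.factor_mk] at this
      rw [← ha, ← hb, this]
    rw [hca, hzero, sub_self, zero_mul]
  · have hv1 : v + 1 ≤ n := by omega
    choose a ha using fun i => Ideal.Quotient.mk_surjective (ca i)
    choose b hb using fun i => Ideal.Quotient.mk_surjective (cb i)
    have hdvd : ∀ i, π ^ v ∣ b i - a i := by
      intro i
      have := hveq i
      rw [← ha i, ← hb i, Ideal.Quotient.factor_mk, Ideal.Quotient.factor_mk,
        Ideal.Quotient.eq, Ideal.span_singleton_pow, Ideal.mem_span_singleton] at this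
      exact (dvd_sub_comm).mp this
    choose s hs using hdvd
    refine ⟨fun i => Ideal.Quotient.mk _ (s i), ?_, fun i => ?_⟩
    · by_contra hns
      push_neg at hns
      refine hvmax hv1 fun i => ?_
      have hsnu : ¬IsUnit (s i) := fun h =>
        hns i (h.map (Ideal.Quotient.mk ((Ideal.span {π} : Ideal R) ^ n)))
      have hmem : s i ∈ Ideal.span {π} := by
        rw [← (IsDiscreteValuationRing.irreducible_iff_uniformizer π).mp hπ]
        exact hsnu
      rw [Ideal.mem_span_singleton] at hmem
      obtain ⟨t, ht⟩ := hmem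
      rw [← ha i, ← hb i, Ideal.Quotient.factor_mk, Ideal.Quotient.factor_mk,
        Ideal.Quotient.eq, Ideal.span_singleton_pow, Ideal.mem_span_singleton]
      refine dvd_sub_comm.mp ?_
      rw [hs i, ht, pow_succ]
      exact ⟨t, by ring⟩
    · rw [← ha i, ← hb i, ← map_sub, hs i, ← map_pow, ← map_mul]
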